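/- For all integers q ≥ 3 and n ≥ 1: the sum, over all integer triples (a,k,i) with 0 ≤ a ≤ k ≤ i ≤ n+a−k, of C(n,a) · (q−2)^a · (C(n−a, k−a) − C(n−a, k−a−1)) equals q^n. -/

import Mathlib

/-- Integer binomial coefficient `C(a,b)`, equal to `0` whenever `b < 0` or `b > a`. -/
def zchoose (a b : ℤ) : ℤ :=
  if 0 ≤ b ∧ b ≤ a then ((a.toNat).choose b.toNat : ℤ) else 0

lemma zchoose_natCast (m j : ℕ) : zchoose (m : ℤ) (j : ℤ) = (m.choose j : ℤ) := by
  unfold zchoose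
  by_cases h : (j : ℤ) ≤ (m : ℤ)
  · rw [if_pos ⟨Int.natCast_nonneg j, h⟩]
    simp
  · rw [if_neg (by tauto)]
    have hj : m < j := by exact_mod_cast not_le.mp h
    simp [Nat.choose_eq_zero_of_lt hj]

lemma zchoose_neg (m : ℤ) {b : ℤ} (hb : b < 0) : zchoose m b = 0 := by
  unfold zchoose
  rw [if_neg]
  rintro ⟨h, -⟩
  omega

/-- Telescoping sum. -/
lemma zchoose_telescope (m t : ℕ) :
    (∑ j ∈ Finset.range (t + 1),
      (zchoose (m : ℤ) (j : ℤ) - zchoose (m : ℤ) ((j : ℤ) - 1)))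
      = (m.choose t : ℤ) := by
  have h := Finset.sum_range_sub (fun j : ℕ => zchoose (m : ℤ) ((j : ℤ) - 1)) (t + 1)
  have e : ∀ j : ℕ, zchoose (m : ℤ) (j : ℤ) - zchoose (m : ℤ) ((j : ℤ) - 1)
      = (fun j : ℕ => zchoose (m : ℤ) ((j : ℤ) - 1)) (j + 1)
        - (fun j : ℕ => zchoose (m : ℤ) ((j : ℤ) - 1)) j := by
    intro j
    simp only
    have : ((j + 1 : ℕ) : ℤ) - 1 = (j : ℤ) := by push_cast; ring
    rw [this]
  rw [Finset.sum_congr rfl fun j _ => e j, h]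
  have h1 : ((t + 1 : ℕ) : ℤ) - 1 = (t : ℤ) := by push_cast; ring
  have h0 : ((0 : ℕ) : ℤ) - 1 = (-1 : ℤ) := by norm_num
  rw [h1, h0, zchoose_natCast, zchoose_neg (m : ℤ) (show (-1 : ℤ) < 0 by norm_num)]
  ring

lemma sum_choose_min (m : ℕ) :
    (∑ i ∈ Finset.range (m + 1), (m.choose (min i (m - i)) : ℤ)) = 2 ^ m := by
  have h : ∀ i ∈ Finset.range (m + 1), (m.choose (min i (m - i)) : ℤ) = (m.choose i : ℤ) := by
    intro i hi
    have him : i ≤ m := Finset.mem_range_succ_iff.mp hi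
    rcases le_or_gt i (m - i) with h1 | h1
    · rw [min_eq_left h1]
    · rw [min_eq_right h1.le, Nat.choose_symm him]
  rw [Finset.sum_congr rfl h]
  rw [← Nat.cast_sum, Nat.sum_range_choose]
  push_cast
  ring

/-- for `q ≥ 3` and `n ≥ 1`, the sum over all integer triples `(a,k,i)` with
`0 ≤ a ≤ k ≤ i ≤ n+a−k` of `C(n,a)·(q−2)^a·(C(n−a,k−a) − C(n−a,k−a−1))` equals `q^n`.
(All such triples satisfy `a,k,i ≤ n`, so ranging over `{0,…,n}³` is no restriction.) -/
theorem statement16 (q n : ℕ) (hq : 3 ≤ q) (hn : 1 ≤ n) :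
    (∑ z ∈ (Finset.range (n + 1) ×ˢ Finset.range (n + 1) ×ˢ Finset.range (n + 1)).filter
        (fun z : ℕ × ℕ × ℕ => z.1 ≤ z.2.1 ∧ z.2.1 ≤ z.2.2 ∧ z.2.2 + z.2.1 ≤ n + z.1),
      (n.choose z.1 : ℤ) * ((q : ℤ) - 2) ^ z.1 *
        (zchoose ((n : ℤ) - z.1) ((z.2.1 : ℤ) - z.1)
          - zchoose ((n : ℤ) - z.1) ((z.2.1 : ℤ) - z.1 - 1)))
      = (q : ℤ) ^ n := by
  classical
  rw [Finset.sum_filter, Finset.sum_product]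
  have key : ∀ a ∈ Finset.range (n + 1),
      (∑ z ∈ Finset.range (n + 1) ×ˢ Finset.range (n + 1),
        if a ≤ z.1 ∧ z.1 ≤ z.2 ∧ z.2 + z.1 ≤ n + a then
          (n.choose a : ℤ) * ((q : ℤ) - 2) ^ a *
            (zchoose ((n : ℤ) - a) ((z.1 : ℤ) - a)
              - zchoose ((n : ℤ) - a) ((z.1 : ℤ) - a - 1)) else 0)
      = (n.choose a : ℤ) * ((q : ℤ) - 2) ^ a * 2 ^ (n - a) := by
    intro a ha
    have han : a ≤ n := Finset.mem_range_succ_iff.mp ha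
    set C : ℤ := (n.choose a : ℤ) * ((q : ℤ) - 2) ^ a with hC
    rw [Finset.sum_product_right]
    have hnm : ((n : ℤ) - a) = ((n - a : ℕ) : ℤ) := by push_cast [han]; ring
    -- inner sum over k, for fixed i
    have hk : ∀ i ∈ Finset.range (n + 1),
        (∑ k ∈ Finset.range (n + 1),
          if a ≤ k ∧ k ≤ i ∧ i + k ≤ n + a then
            C * (zchoose ((n : ℤ) - a) ((k : ℤ) - a)
              - zchoose ((n : ℤ) - a) ((k : ℤ) - a - 1)) else 0)
        = if a ≤ i then C * ((n - a).choose (min (i - a) (n - i)) : ℤ) else 0 := by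
      intro i hi
      have hin : i ≤ n := Finset.mem_range_succ_iff.mp hi
      by_cases hai : a ≤ i
      · rw [if_pos hai, ← Finset.sum_filter]
        have hset : (Finset.range (n + 1)).filter
            (fun k => a ≤ k ∧ k ≤ i ∧ i + k ≤ n + a) = Finset.Icc a (min i (n + a - i)) := by
          ext k
          simp only [Finset.mem_filter, Finset.mem_range, Finset.mem_Icc, le_min_iff]
          omega
        rw [hset, ← Finset.mul_sum]
        congr 1
        rw [← Finset.Ico_add_one_right_eq_Icc, Finset.sum_Ico_eq_sum_range]
        have hta : a ≤ min i (n + a - i) := le_min hai (by omega)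
        have h1 : min i (n + a - i) + 1 - a = (min i (n + a - i) - a) + 1 := by omega
        rw [h1]
        have e : ∀ j : ℕ,
            (zchoose ((n : ℤ) - a) (((a + j : ℕ) : ℤ) - a)
              - zchoose ((n : ℤ) - a) (((a + j : ℕ) : ℤ) - a - 1))
            = (zchoose ((n - a : ℕ) : ℤ) (j : ℤ) - zchoose ((n - a : ℕ) : ℤ) ((j : ℤ) - 1)) := by
          intro j
          have : ((a + j : ℕ) : ℤ) - a = (j : ℤ) := by push_cast; ring
          rw [this, hnm]
        rw [Finset.sum_congr rfl fun j _ => e j, zchoose_telescope]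
        have harg : min i (n + a - i) - a = min (i - a) (n - i) := by omega
        rw [harg]
      · rw [if_neg hai]
        apply Finset.sum_eq_zero
        intro k _
        rw [if_neg]
        rintro ⟨h1, h2, -⟩
        omega
    rw [Finset.sum_congr rfl hk]
    rw [Finset.range_eq_Ico, ← Finset.sum_Ico_consecutive _ (Nat.zero_le a) (by omega : a ≤ n + 1)]
    have hz : (∑ i ∈ Finset.Ico 0 a,
        if a ≤ i then C * ((n - a).choose (min (i - a) (n - i)) : ℤ) else 0) = 0 := by
      apply Finset.sum_eq_zero
      intro i hi
      rw [if_neg]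
      simp only [Finset.mem_Ico] at hi
      omega
    rw [hz, zero_add, Finset.sum_Ico_eq_sum_range]
    have h2 : n + 1 - a = (n - a) + 1 := by omega
    rw [h2]
    have e2 : ∀ i ∈ Finset.range ((n - a) + 1),
        (if a ≤ a + i then C * ((n - a).choose (min (a + i - a) (n - (a + i))) : ℤ) else 0)
        = C * ((n - a).choose (min i (n - a - i)) : ℤ) := by
      intro i hi
      rw [if_pos (by omega)]
      have h3 : a + i - a = i := by omega
      have h4 : n - (a + i) = n - a - i := by omega
      rw [h3, h4]
    rw [Finset.sum_congr rfl e2, ← Finset.mul_sum, sum_choose_min]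
  rw [Finset.sum_congr rfl key]
  have hb := add_pow ((q : ℤ) - 2) 2 n
  have hq2 : ((q : ℤ) - 2) + 2 = (q : ℤ) := by ring
  rw [hq2] at hb
  rw [hb]
  apply Finset.sum_congr rfl
  intro a _
  ring
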